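/- Let A = [[A_ff, A_fc],[A_cf, A_cc]] be an invertible matrix on F ⊕ C with A_ff invertible, let P = [[W],[I]] and R = [Z, I], and set δ_P = A_ff·W + A_fc, δ_R = Z·A_ff + A_cf, K = R·A·P. Suppose Rᵀ satisfies the weak approximation property with respect to A·Aᵀ with constant C_R, i.e., for every vector v on F ⊕ C there exists a coarse vector w_c with ‖v − Rᵀ·w_c‖² ≤ (C_R/‖A·Aᵀ‖)·‖Aᵀ·v‖². Set C_Z = sqrt(C_R·(1 + ‖Z‖²)/‖A·Aᵀ‖) and assume C_Z·‖δ_P‖ < 1. Then K is invertible, and ‖K⁻¹·δ_R·A_ff⁻¹‖ ≤ C_Z/(1 − C_Z·‖δ_P‖) and ‖K⁻¹·δ_R‖ ≤ C_Z·‖A_ff‖/(1 − C_Z·‖δ_P‖). -/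

import Mathlib

open Matrix
open scoped Matrix.Norms.L2Operator

/-- The Euclidean (ℓ²) norm of a finitely-supported real vector. -/
noncomputable def euclNorm {ι : Type*} [Fintype ι] (v : ι → ℝ) : ℝ :=
  ‖(WithLp.equiv 2 (ι → ℝ)).symm v‖

section Helpers
variable {m n : Type*} [Fintype m] [Fintype n] [DecidableEq m] [DecidableEq n]

lemma euclNorm_nonneg (v : m → ℝ) : 0 ≤ euclNorm v := norm_nonneg _

lemma euclNorm_sq (v : m → ℝ) : euclNorm v ^ 2 = ∑ i, v i ^ 2 := by
  rw [euclNorm, EuclideanSpace.norm_eq, Real.sq_sqrt (by positivity)]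
  simp [sq_abs]

lemma euclNorm_zero : euclNorm (0 : m → ℝ) = 0 := by simp [euclNorm]

lemma euclNorm_pos {v : m → ℝ} (h : v ≠ 0) : 0 < euclNorm v := by
  rw [euclNorm, norm_pos_iff]
  simpa using h

lemma euclNorm_add_le (u v : m → ℝ) : euclNorm (u + v) ≤ euclNorm u + euclNorm v := by
  simpa [euclNorm] using
    norm_add_le ((WithLp.equiv 2 (m → ℝ)).symm u) ((WithLp.equiv 2 (m → ℝ)).symm v)

lemma euclNorm_neg (v : m → ℝ) : euclNorm (-v) = euclNorm v := by
  simpa [euclNorm] using norm_neg ((WithLp.equiv 2 (m → ℝ)).symm v)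

lemma euclNorm_mulVec_le (N : Matrix m n ℝ) (x : n → ℝ) :
    euclNorm (N *ᵥ x) ≤ ‖N‖ * euclNorm x := by
  simpa [euclNorm] using N.l2_opNorm_mulVec ((WithLp.equiv 2 (n → ℝ)).symm x)

lemma l2OpNorm_le_of_forall {c : ℝ} (hc : 0 ≤ c) (N : Matrix m n ℝ)
    (h : ∀ x : n → ℝ, euclNorm (N *ᵥ x) ≤ c * euclNorm x) : ‖N‖ ≤ c := by
  rw [Matrix.l2_opNorm_def]
  refine ContinuousLinearMap.opNorm_le_bound _ hc fun x => ?_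
  simpa [euclNorm, LinearEquiv.trans_apply, Matrix.toEuclideanLin_apply] using
    h ((WithLp.equiv 2 (n → ℝ)) x)

lemma euclNorm_sq_elim (x : m → ℝ) (y : n → ℝ) :
    euclNorm (Sum.elim x y) ^ 2 = euclNorm x ^ 2 + euclNorm y ^ 2 := by
  simp [euclNorm_sq, Fintype.sum_sum_type]

lemma euclNorm_elim_zero_right (x : m → ℝ) :
    euclNorm (Sum.elim x (0 : n → ℝ)) = euclNorm x := by
  have h := euclNorm_sq_elim x (0 : n → ℝ)
  rw [euclNorm_zero] at h
  have := euclNorm_nonneg (Sum.elim x (0 : n → ℝ))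
  nlinarith [euclNorm_nonneg x]

lemma euclNorm_elim_zero_left (y : n → ℝ) :
    euclNorm (Sum.elim (0 : m → ℝ) y) = euclNorm y := by
  have h := euclNorm_sq_elim (0 : m → ℝ) y
  rw [euclNorm_zero] at h
  nlinarith [euclNorm_nonneg y, euclNorm_nonneg (Sum.elim (0 : m → ℝ) y)]

lemma transpose_real_norm (N : Matrix m n ℝ) : ‖Nᵀ‖ = ‖N‖ := by
  have : Nᴴ = Nᵀ := by ext i j; simp [conjTranspose_apply]
  rw [← this, Matrix.l2_opNorm_conjTranspose]

lemma l2OpNorm_one_le [Nonempty m] : ‖(1 : Matrix m m ℝ)‖ ≤ 1 := by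
  refine l2OpNorm_le_of_forall zero_le_one _ fun x => ?_
  simp [Matrix.one_mulVec]

end Helpers

lemma le_of_sq_le_sq' {u v : ℝ} (hu : 0 ≤ u) (hv : 0 ≤ v) (h : u ^ 2 ≤ v ^ 2) : u ≤ v := by
  nlinarith

lemma fromColumns_add' {m n₁ n₂ : Type*} (A₁ B₁ : Matrix m n₁ ℝ) (A₂ B₂ : Matrix m n₂ ℝ) :
    fromCols A₁ A₂ + fromCols B₁ B₂ = fromCols (A₁ + B₁) (A₂ + B₂) := by
  ext i (j | j) <;> simp

lemma fromBlocks_sub' {m₁ m₂ n₁ n₂ : Type*} (A₁ A₂ : Matrix m₁ n₁ ℝ) (B₁ B₂ : Matrix m₁ n₂ ℝ)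
    (C₁ C₂ : Matrix m₂ n₁ ℝ) (D₁ D₂ : Matrix m₂ n₂ ℝ) :
    fromBlocks A₁ B₁ C₁ D₁ - fromBlocks A₂ B₂ C₂ D₂ =
      fromBlocks (A₁ - A₂) (B₁ - B₂) (C₁ - C₂) (D₁ - D₂) := by
  ext (i | i) (j | j) <;> simp


set_option maxHeartbeats 2000000 in
/-- **Lemma 3.2 (WAP on R).** If `Rᵀ` satisfies the WAP with respect to `A·Aᵀ` with constant
`C_R`, and `C_Z·‖δ_P‖ < 1` with `C_Z = sqrt(C_R(1 + ‖Z‖²)/‖A·Aᵀ‖)`, then `K` is invertible,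
`‖K⁻¹·δ_R·A_ff⁻¹‖ ≤ C_Z/(1 − C_Z‖δ_P‖)` and `‖K⁻¹·δ_R‖ ≤ C_Z‖A_ff‖/(1 − C_Z‖δ_P‖)`. -/
theorem wap_on_R_coarse_bounds
    {F C : Type*} [Fintype F] [Fintype C] [DecidableEq F] [DecidableEq C]
    (Aff : Matrix F F ℝ) (Afc : Matrix F C ℝ) (Acf : Matrix C F ℝ) (Acc : Matrix C C ℝ)
    (W : Matrix F C ℝ) (Z : Matrix C F ℝ)
    (A : Matrix (F ⊕ C) (F ⊕ C) ℝ) (hA : A = fromBlocks Aff Afc Acf Acc)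
    (hAinv : IsUnit A) (hAff : IsUnit Aff)
    (P : Matrix (F ⊕ C) C ℝ) (hP : P = fromRows W 1)
    (R : Matrix C (F ⊕ C) ℝ) (hR : R = fromCols Z 1)
    (K : Matrix C C ℝ) (hK : K = R * A * P)
    (δP : Matrix F C ℝ) (hδP : δP = Aff * W + Afc)
    (δR : Matrix C F ℝ) (hδR : δR = Z * Aff + Acf)
    (CR : ℝ)
    (hWAP : ∀ v : (F ⊕ C) → ℝ, ∃ wc : C → ℝ,
      euclNorm (v - Rᵀ *ᵥ wc) ^ 2 ≤ (CR / ‖A * Aᵀ‖) * euclNorm (Aᵀ *ᵥ v) ^ 2)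
    (CZ : ℝ) (hCZ : CZ = Real.sqrt (CR * (1 + ‖Z‖ ^ 2) / ‖A * Aᵀ‖))
    (hsmall : CZ * ‖δP‖ < 1) :
    IsUnit K ∧
      ‖K⁻¹ * δR * Aff⁻¹‖ ≤ CZ / (1 - CZ * ‖δP‖) ∧
      ‖K⁻¹ * δR‖ ≤ CZ * ‖Aff‖ / (1 - CZ * ‖δP‖) := by
  have hCZ0 : 0 ≤ CZ := hCZ ▸ Real.sqrt_nonneg _
  have hδP0 : (0:ℝ) ≤ ‖δP‖ := norm_nonneg _
  have hden : (0:ℝ) < 1 - CZ * ‖δP‖ := by nlinarith [mul_nonneg hCZ0 hδP0]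
  rcases isEmpty_or_nonempty C with hC | hC
  · -- C is empty: everything is trivial
    have hK1 : K = 1 := by ext i j; exact isEmptyElim i
    have h1 : K⁻¹ * δR * Aff⁻¹ = 0 := by ext i j; exact isEmptyElim i
    have h2 : K⁻¹ * δR = 0 := by ext i j; exact isEmptyElim i
    refine ⟨hK1 ▸ isUnit_one, ?_, ?_⟩
    · rw [h1, norm_zero]
      exact div_nonneg hCZ0 hden.le
    · rw [h2, norm_zero]
      exact div_nonneg (mul_nonneg hCZ0 (norm_nonneg _)) hden.le
  obtain ⟨c₀⟩ := id hC
  -- basic invertibility facts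
  have hAffd : IsUnit Aff.det := (Matrix.isUnit_iff_isUnit_det _).mp hAff
  have hAffr : Aff * Aff⁻¹ = 1 := Matrix.mul_nonsing_inv _ hAffd
  have hAffl : Aff⁻¹ * Aff = 1 := Matrix.nonsing_inv_mul _ hAffd
  have hAd : IsUnit A.det := (Matrix.isUnit_iff_isUnit_det _).mp hAinv
  have hAr : A * A⁻¹ = 1 := Matrix.mul_nonsing_inv _ hAd
  have hAl : A⁻¹ * A = 1 := Matrix.nonsing_inv_mul _ hAd
  have hATd : IsUnit (Aᵀ).det := by rwa [Matrix.det_transpose]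
  -- ‖A * Aᵀ‖ > 0
  have hAAT : A * Aᵀ ≠ 0 := by
    intro h0
    have h1 := Matrix.mul_nonsing_inv (A * Aᵀ)
      ((Matrix.isUnit_iff_isUnit_det _).mp (hAinv.mul ((Matrix.isUnit_iff_isUnit_det _).mpr hATd)))
    rw [h0, zero_mul] at h1
    have := congrFun (congrFun h1 (Sum.inr c₀)) (Sum.inr c₀)
    simp [Matrix.one_apply_eq] at this
  have hAA : (0:ℝ) < ‖A * Aᵀ‖ := norm_pos_iff.mpr hAAT
  -- CR ≥ 0
  have hCR : 0 ≤ CR := by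
    set w : (F ⊕ C) → ℝ := Sum.elim 0 (fun _ => 1) with hw
    have hAtv : Aᵀ *ᵥ ((Aᵀ)⁻¹ *ᵥ w) = w := by
      rw [Matrix.mulVec_mulVec, Matrix.mul_nonsing_inv _ hATd, Matrix.one_mulVec]
    obtain ⟨wc, hwc⟩ := hWAP ((Aᵀ)⁻¹ *ᵥ w)
    rw [hAtv] at hwc
    have hwpos : 0 < euclNorm w := by
      refine euclNorm_pos ?_
      intro h
      have := congrFun h (Sum.inr c₀)
      simp [hw] at this
    have h0 : 0 ≤ (CR / ‖A * Aᵀ‖) * euclNorm w ^ 2 := le_trans (sq_nonneg _) hwc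
    have hq : 0 ≤ CR / ‖A * Aᵀ‖ := by nlinarith [pow_pos hwpos 2]
    have := mul_nonneg hq hAA.le
    rwa [div_mul_cancel₀ _ hAA.ne'] at this
  have hfrac : 0 ≤ CR / ‖A * Aᵀ‖ := div_nonneg hCR hAA.le
  have hCZmul : Real.sqrt (1 + ‖Z‖ ^ 2) * Real.sqrt (CR / ‖A * Aᵀ‖) = CZ := by
    rw [hCZ, ← Real.sqrt_mul (by positivity)]
    congr 1
    ring
  -- the projection matrices
  set Ef : Matrix F (F ⊕ C) ℝ := fromCols 1 0 with hEf
  set Ec : Matrix C (F ⊕ C) ℝ := fromCols 0 1 with hEc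
  set S : Matrix C C ℝ := Acc - Acf * Aff⁻¹ * Afc with hS
  have hEfA : Ef * A = fromCols Aff Afc := by
    rw [hEf, hA, fromCols_mul_fromBlocks]
    simp
  have hδRA : δR * (Aff⁻¹ * Aff) = δR := by rw [hAffl, Matrix.mul_one]
  have hδRinv : δR * Aff⁻¹ = Z + Acf * Aff⁻¹ := by
    rw [hδR, Matrix.add_mul, Matrix.mul_assoc, hAffr, Matrix.mul_one]
  -- key algebraic identity:  X * A + S * Ec = R * A  with X = δR * Aff⁻¹ * Ef
  have hXA : (δR * Aff⁻¹ * Ef) * A + S * Ec = R * A := by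
    have h1 : (δR * Aff⁻¹ * Ef) * A = fromCols (δR * (Aff⁻¹ * Aff)) (δR * (Aff⁻¹ * Afc)) := by
      rw [Matrix.mul_assoc, hEfA, mul_fromCols, Matrix.mul_assoc, Matrix.mul_assoc]
    have h2 : S * Ec = fromCols 0 S := by
      rw [hEc, mul_fromCols, Matrix.mul_zero, Matrix.mul_one]
    have h3 : δR * (Aff⁻¹ * Afc) + S = Z * Afc + Acc := by
      rw [← Matrix.mul_assoc, hδRinv, hS, Matrix.add_mul]
      abel
    rw [h1, h2, fromColumns_add', add_zero, hδRA, h3, hR, hA, fromCols_mul_fromBlocks, hδR]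
    simp
  have hX : δR * (Aff⁻¹ * Ef) + S * (Ec * A⁻¹) = R := by
    have h := congrArg (fun M => M * A⁻¹) hXA
    simp only [Matrix.add_mul, Matrix.mul_assoc, hAr, Matrix.mul_one] at h
    exact h
  have hEfEcT : Ef * Ecᵀ = 0 := by
    rw [hEf, hEc, transpose_fromCols, fromCols_mul_fromRows]
    simp
  have hREcT : R * Ecᵀ = 1 := by
    rw [hR, hEc, transpose_fromCols, fromCols_mul_fromRows]
    simp
  have hSr : S * (Ec * (A⁻¹ * Ecᵀ)) = 1 := by
    have h := congrArg (fun M => M * Ecᵀ) hX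
    simp only [Matrix.add_mul, Matrix.mul_assoc] at h
    rw [hEfEcT] at h
    simp only [Matrix.mul_zero, zero_add, hREcT] at h
    exact h
  have hSr2 : S * (Ec * A⁻¹ * Ecᵀ) = 1 := by rw [Matrix.mul_assoc]; exact hSr
  have hSdet : IsUnit S.det := Matrix.isUnit_det_of_right_inverse hSr2
  have hSunit : IsUnit S := (Matrix.isUnit_iff_isUnit_det _).mpr hSdet
  have hSinv : S⁻¹ = Ec * A⁻¹ * Ecᵀ := Matrix.inv_eq_right_inv hSr2
  have hSl : S⁻¹ * S = 1 := Matrix.nonsing_inv_mul _ hSdet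
  have hSrr : S * S⁻¹ = 1 := Matrix.mul_nonsing_inv _ hSdet
  -- M = T * Ef with T = S⁻¹ * (δR * Aff⁻¹)
  have hMT : S⁻¹ * (δR * Aff⁻¹) * Ef = S⁻¹ * R - Ec * A⁻¹ := by
    have h := congrArg (fun M => S⁻¹ * M) hX
    simp only [Matrix.mul_add] at h
    rw [← Matrix.mul_assoc S⁻¹ S, hSl, Matrix.one_mul] at h
    rw [Matrix.mul_assoc, Matrix.mul_assoc δR]
    exact eq_sub_of_add_eq h
  have hEcRT : Ec * Rᵀ = 1 := by
    rw [hR, hEc, transpose_fromCols, fromCols_mul_fromRows]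
    simp
  have hGRT : (Rᵀ * Ec - 1) * Rᵀ = 0 := by
    rw [Matrix.sub_mul, Matrix.mul_assoc, hEcRT, Matrix.mul_one, Matrix.one_mul, sub_self]
  have hG : Rᵀ * Ec - (1 : Matrix (F ⊕ C) (F ⊕ C) ℝ) = fromBlocks (-1) Zᵀ 0 0 := by
    have h1 : Rᵀ * Ec = fromBlocks 0 Zᵀ 0 1 := by
      rw [hR, hEc, transpose_fromCols, fromRows_mul_fromCols]
      simp
    rw [h1, ← fromBlocks_one, fromBlocks_sub']
    simp
  -- norm bound for G = Rᵀ * Ec - 1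
  have hsq1 : (0:ℝ) ≤ 1 + ‖Z‖ ^ 2 := by positivity
  have hGbound : ∀ x : (F ⊕ C) → ℝ,
      euclNorm ((Rᵀ * Ec - 1) *ᵥ x) ≤ Real.sqrt (1 + ‖Z‖ ^ 2) * euclNorm x := by
    intro x
    have h1 : (Rᵀ * Ec - 1) *ᵥ x = Sum.elim (-(x ∘ Sum.inl) + Zᵀ *ᵥ (x ∘ Sum.inr)) 0 := by
      rw [hG, fromBlocks_mulVec, Matrix.neg_mulVec, Matrix.one_mulVec]
      congr 1
      simp [Matrix.zero_mulVec]
    rw [h1, euclNorm_elim_zero_right]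
    have h2 : euclNorm (-(x ∘ Sum.inl) + Zᵀ *ᵥ (x ∘ Sum.inr)) ≤
        euclNorm (x ∘ Sum.inl) + ‖Z‖ * euclNorm (x ∘ Sum.inr) := by
      refine le_trans (euclNorm_add_le _ _) ?_
      rw [euclNorm_neg]
      refine add_le_add (le_refl _) (le_trans (euclNorm_mulVec_le _ _) ?_)
      rw [transpose_real_norm]
    refine le_trans h2 ?_
    have hsplit := euclNorm_sq_elim (x ∘ Sum.inl) (x ∘ Sum.inr)
    rw [Sum.elim_comp_inl_inr] at hsplit
    set a := euclNorm (x ∘ Sum.inl) with ha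
    set b := euclNorm (x ∘ Sum.inr) with hb
    refine le_of_sq_le_sq'
      (add_nonneg (euclNorm_nonneg _) (mul_nonneg (norm_nonneg _) (euclNorm_nonneg _)))
      (mul_nonneg (Real.sqrt_nonneg _) (euclNorm_nonneg _)) ?_
    rw [mul_pow, Real.sq_sqrt hsq1, hsplit]
    nlinarith [sq_nonneg (‖Z‖ * a - b), euclNorm_nonneg (x ∘ Sum.inl),
      euclNorm_nonneg (x ∘ Sum.inr), norm_nonneg Z]
  set T : Matrix C F ℝ := S⁻¹ * (δR * Aff⁻¹) with hT
  set M : Matrix C (F ⊕ C) ℝ := S⁻¹ * R - Ec * A⁻¹ with hMdef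
  have hEcTmul : ∀ u : C → ℝ, Ecᵀ *ᵥ u = Sum.elim (0 : F → ℝ) u := by
    intro u
    rw [hEc, transpose_fromCols, Matrix.transpose_zero, Matrix.transpose_one, fromRows_mulVec,
      Matrix.zero_mulVec, Matrix.one_mulVec]
  have hkey : ∀ u : C → ℝ, euclNorm (Mᵀ *ᵥ u) ≤ CZ * euclNorm u := by
    intro u
    set v : (F ⊕ C) → ℝ := (A⁻¹)ᵀ *ᵥ (Ecᵀ *ᵥ u) with hv
    have hAtv : Aᵀ *ᵥ v = Ecᵀ *ᵥ u := by
      rw [hv, Matrix.mulVec_mulVec, ← Matrix.transpose_mul, hAl, Matrix.transpose_one,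
        Matrix.one_mulVec]
    have hnormw : euclNorm (Ecᵀ *ᵥ u) = euclNorm u := by
      rw [hEcTmul u, euclNorm_elim_zero_left]
    have hSv : (S⁻¹)ᵀ *ᵥ u = Ec *ᵥ v := by
      rw [hv, Matrix.mulVec_mulVec, Matrix.mulVec_mulVec]
      congr 1
      rw [hSinv]
      simp [Matrix.transpose_mul, Matrix.mul_assoc]
    have hMu : Mᵀ *ᵥ u = (Rᵀ * Ec - 1) *ᵥ v := by
      calc Mᵀ *ᵥ u = Rᵀ *ᵥ ((S⁻¹)ᵀ *ᵥ u) - (A⁻¹)ᵀ *ᵥ (Ecᵀ *ᵥ u) := by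
            rw [hMdef, Matrix.transpose_sub, Matrix.transpose_mul, Matrix.transpose_mul,
              Matrix.sub_mulVec, ← Matrix.mulVec_mulVec, ← Matrix.mulVec_mulVec]
        _ = (Rᵀ * Ec) *ᵥ v - 1 *ᵥ v := by
            rw [hSv, ← hv, Matrix.mulVec_mulVec, Matrix.one_mulVec]
        _ = (Rᵀ * Ec - 1) *ᵥ v := by rw [Matrix.sub_mulVec]
    obtain ⟨wc, hwc⟩ := hWAP v
    have hwc' : euclNorm (v - Rᵀ *ᵥ wc) ≤ Real.sqrt (CR / ‖A * Aᵀ‖) * euclNorm (Aᵀ *ᵥ v) := by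
      refine le_of_sq_le_sq' (euclNorm_nonneg _)
        (mul_nonneg (Real.sqrt_nonneg _) (euclNorm_nonneg _)) ?_
      rw [mul_pow, Real.sq_sqrt hfrac]
      exact hwc
    have hGv : (Rᵀ * Ec - 1) *ᵥ v = (Rᵀ * Ec - 1) *ᵥ (v - Rᵀ *ᵥ wc) := by
      rw [Matrix.mulVec_sub, Matrix.mulVec_mulVec wc (Rᵀ * Ec - 1) Rᵀ, hGRT,
        Matrix.zero_mulVec, sub_zero]
    calc euclNorm (Mᵀ *ᵥ u) = euclNorm ((Rᵀ * Ec - 1) *ᵥ (v - Rᵀ *ᵥ wc)) := by rw [hMu, hGv]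
      _ ≤ Real.sqrt (1 + ‖Z‖ ^ 2) * euclNorm (v - Rᵀ *ᵥ wc) := hGbound _
      _ ≤ Real.sqrt (1 + ‖Z‖ ^ 2) * (Real.sqrt (CR / ‖A * Aᵀ‖) * euclNorm (Aᵀ *ᵥ v)) :=
          mul_le_mul_of_nonneg_left hwc' (Real.sqrt_nonneg _)
      _ = CZ * euclNorm u := by rw [hAtv, hnormw, ← mul_assoc, hCZmul]
  have hMnorm : ‖M‖ ≤ CZ := by
    rw [← transpose_real_norm]
    exact l2OpNorm_le_of_forall hCZ0 _ hkey
  have hTnorm : ‖T‖ ≤ CZ := by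
    refine l2OpNorm_le_of_forall hCZ0 _ fun x => ?_
    have hEfx : Ef *ᵥ Sum.elim x (0 : C → ℝ) = x := by
      rw [hEf, fromCols_mulVec_sumElim, Matrix.one_mulVec, Matrix.mulVec_zero, add_zero]
    have h1 : T *ᵥ x = M *ᵥ Sum.elim x 0 := by
      rw [← hMT, ← Matrix.mulVec_mulVec (Sum.elim x (0 : C → ℝ)) T Ef, hEfx]
    rw [h1]
    calc euclNorm (M *ᵥ Sum.elim x 0) ≤ ‖M‖ * euclNorm (Sum.elim x (0 : C → ℝ)) :=
          euclNorm_mulVec_le _ _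
      _ = ‖M‖ * euclNorm x := by rw [euclNorm_elim_zero_right]
      _ ≤ CZ * euclNorm x := mul_le_mul_of_nonneg_right hMnorm (euclNorm_nonneg _)
  -- coarse operator identity K = S * (1 + T δP)
  have hAP : A * P = fromRows δP (Acf * W + Acc) := by
    rw [hA, hP, fromBlocks_mul_fromRows, Matrix.mul_one, Matrix.mul_one, ← hδP]
  have hKexp : K = Z * δP + (Acf * W + Acc) := by
    rw [hK, Matrix.mul_assoc, hAP, hR, fromCols_mul_fromRows, Matrix.one_mul]
  have hAδP : Aff⁻¹ * δP = W + Aff⁻¹ * Afc := by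
    rw [hδP, Matrix.mul_add, ← Matrix.mul_assoc, hAffl, Matrix.one_mul]
  have hST : S * (T * δP) = δR * (Aff⁻¹ * δP) := by
    rw [hT, ← Matrix.mul_assoc S, ← Matrix.mul_assoc S S⁻¹, hSrr, Matrix.one_mul,
      Matrix.mul_assoc]
  have hKS : K = S * (1 + T * δP) := by
    have hZAA : Z * Aff * Aff⁻¹ = Z := by rw [Matrix.mul_assoc, hAffr, Matrix.mul_one]
    rw [Matrix.mul_add, Matrix.mul_one, hST, hKexp, hAδP, hS, hδR, hδP]
    simp only [Matrix.add_mul, Matrix.mul_add, ← Matrix.mul_assoc, hZAA]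
    abel
  haveI : CompleteSpace (Matrix C C ℝ) := FiniteDimensional.complete ℝ _
  have hTδP : ‖T * δP‖ ≤ CZ * ‖δP‖ :=
    le_trans (Matrix.l2_opNorm_mul _ _) (mul_le_mul_of_nonneg_right hTnorm hδP0)
  have hTδP1 : ‖T * δP‖ < 1 := lt_of_le_of_lt hTδP hsmall
  have hneg : ‖-(T * δP)‖ < 1 := by rwa [norm_neg]
  have hNunit : IsUnit (1 + T * δP) := by
    have h := (Units.oneSub (-(T * δP)) hneg).isUnit
    rwa [Units.val_oneSub, sub_neg_eq_add] at h
  have hKunit : IsUnit K := by rw [hKS]; exact hSunit.mul hNunit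
  have hNdet : IsUnit (1 + T * δP).det := (Matrix.isUnit_iff_isUnit_det _).mp hNunit
  have hNr : (1 + T * δP) * (1 + T * δP)⁻¹ = 1 := Matrix.mul_nonsing_inv _ hNdet
  have hNinv : (1 + T * δP)⁻¹ = 1 - T * δP * (1 + T * δP)⁻¹ := by
    rw [Matrix.add_mul, Matrix.one_mul] at hNr
    exact eq_sub_of_add_eq hNr
  have hNnorm : ‖(1 + T * δP)⁻¹‖ * (1 - CZ * ‖δP‖) ≤ 1 := by
    have h1 : ‖(1 + T * δP)⁻¹‖ ≤ 1 + ‖T * δP‖ * ‖(1 + T * δP)⁻¹‖ := by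
      calc ‖(1 + T * δP)⁻¹‖ = ‖1 - T * δP * (1 + T * δP)⁻¹‖ := by rw [← hNinv]
        _ ≤ ‖(1 : Matrix C C ℝ)‖ + ‖T * δP * (1 + T * δP)⁻¹‖ := norm_sub_le _ _
        _ ≤ 1 + ‖T * δP‖ * ‖(1 + T * δP)⁻¹‖ :=
            add_le_add l2OpNorm_one_le (Matrix.l2_opNorm_mul _ _)
    nlinarith [norm_nonneg ((1 + T * δP)⁻¹), norm_nonneg (T * δP),
      mul_le_mul_of_nonneg_left hTδP (norm_nonneg ((1 + T * δP)⁻¹))]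
  have hKinvT : K⁻¹ * δR * Aff⁻¹ = (1 + T * δP)⁻¹ * T := by
    rw [hKS, Matrix.mul_inv_rev, hT]
    rw [Matrix.mul_assoc, Matrix.mul_assoc]
  have hfinal1 : ‖K⁻¹ * δR * Aff⁻¹‖ ≤ CZ / (1 - CZ * ‖δP‖) := by
    rw [hKinvT]
    calc ‖(1 + T * δP)⁻¹ * T‖ ≤ ‖(1 + T * δP)⁻¹‖ * ‖T‖ := Matrix.l2_opNorm_mul _ _
      _ ≤ ‖(1 + T * δP)⁻¹‖ * CZ := mul_le_mul_of_nonneg_left hTnorm (norm_nonneg _)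
      _ ≤ (1 / (1 - CZ * ‖δP‖)) * CZ := by
          refine mul_le_mul_of_nonneg_right ?_ hCZ0
          rw [le_div_iff₀ hden]
          exact hNnorm
      _ = CZ / (1 - CZ * ‖δP‖) := by ring
  have hfinal2 : ‖K⁻¹ * δR‖ ≤ CZ * ‖Aff‖ / (1 - CZ * ‖δP‖) := by
    have h1 : K⁻¹ * δR = K⁻¹ * δR * Aff⁻¹ * Aff := by
      rw [Matrix.mul_assoc (K⁻¹ * δR), hAffl, Matrix.mul_one]
    rw [h1]
    calc ‖K⁻¹ * δR * Aff⁻¹ * Aff‖ ≤ ‖K⁻¹ * δR * Aff⁻¹‖ * ‖Aff‖ := Matrix.l2_opNorm_mul _ _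
      _ ≤ (CZ / (1 - CZ * ‖δP‖)) * ‖Aff‖ :=
          mul_le_mul_of_nonneg_right hfinal1 (norm_nonneg _)
      _ = CZ * ‖Aff‖ / (1 - CZ * ‖δP‖) := by ring
  exact ⟨hKunit, hfinal1, hfinal2⟩
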